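/- Let $\Delta \subseteq \mathbb{R}^n$ be a nonempty compact convex set. Then $\lim_{k \to \infty} \#(k\Delta \cap \mathbb{Z}^n)/k^n = \mathrm{Vol}(\Delta)$, where $k\Delta = \{kx \mid x \in \Delta\}$, $\#$ denotes cardinality, and $\mathrm{Vol}$ is the $n$-dimensional Lebesgue measure. -/

import Mathlib

open Pointwise MeasureTheory Filter

section AuxLattice

open Metric Bornology

/-- The embedding of the lattice `ℤⁿ` into `ℝⁿ`. -/
def latticeEmb (n : ℕ) : (Fin n → ℤ) → (Fin n → ℝ) := fun k i => (k i : ℝ)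

/-- The set of integral points of `ℝⁿ`. -/
def intPts (n : ℕ) : Set (Fin n → ℝ) := Set.range (latticeEmb n)

lemma latticeEmb_injective (n : ℕ) : Function.Injective (latticeEmb n) := by
  intro a b h
  funext i
  have := congrFun h i
  simpa [latticeEmb] using this

/-- Lattice points lying in the dilate `kΔ`. -/
def lpvTset (n k : ℕ) (Δ : Set (Fin n → ℝ)) : Set (Fin n → ℤ) :=
  latticeEmb n ⁻¹' ((k : ℝ) • Δ)

/-- The half-open cube of side `1/k` based at `m/k`. -/
def lpvCube (n k : ℕ) (m : Fin n → ℤ) : Set (Fin n → ℝ) :=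
  Set.univ.pi fun i => Set.Ico ((m i : ℝ) / k) ((m i : ℝ) / k + 1 / k)

lemma lpvTset_finite {n : ℕ} {Δ : Set (Fin n → ℝ)} (hcp : IsCompact Δ) (k : ℕ) :
    (lpvTset n k Δ).Finite := by
  obtain ⟨R, hR⟩ := (hcp.smul (k : ℝ)).isBounded.subset_closedBall 0
  refine (Set.Finite.pi fun i : Fin n => Set.finite_Icc (⌈-R⌉) ⌊R⌋).subset ?_
  intro m hm
  have h1 : latticeEmb n m ∈ Metric.closedBall 0 R := hR hm
  rw [Metric.mem_closedBall, dist_zero_right] at h1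
  intro i _
  have h2 : ‖(m i : ℝ)‖ ≤ R := le_trans (norm_le_pi_norm (latticeEmb n m) i) h1
  rw [Real.norm_eq_abs, abs_le] at h2
  exact ⟨Int.ceil_le.mpr h2.1, Int.le_floor.mpr h2.2⟩

lemma lpv_card_eq (n k : ℕ) (Δ : Set (Fin n → ℝ)) :
    Nat.card ↥(((k : ℝ) • Δ) ∩ intPts n) = Nat.card (lpvTset n k Δ) := by
  rw [intPts, ← Set.image_preimage_eq_inter_range, lpvTset,
    Nat.card_image_of_injective (latticeEmb_injective n)]

lemma lpv_mem_Tset (n k : ℕ) (hk : 1 ≤ k) (Δ : Set (Fin n → ℝ)) (m : Fin n → ℤ) :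
    m ∈ lpvTset n k Δ ↔ (fun i => (m i : ℝ) / k) ∈ Δ := by
  have hk0 : (k : ℝ) ≠ 0 := by positivity
  rw [lpvTset, Set.mem_preimage, Set.mem_smul_set_iff_inv_smul_mem₀ hk0]
  constructor <;> intro h <;> convert h using 1 <;> funext i <;>
    simp [latticeEmb, Pi.smul_apply, div_eq_inv_mul]

lemma lpv_vol_cube (n k : ℕ) (m : Fin n → ℤ) :
    volume (lpvCube n k m) = ENNReal.ofReal (1 / k) ^ n := by
  rw [lpvCube, volume_pi_pi]
  simp [Real.volume_Ico]

lemma lpv_disjoint (n k : ℕ) (hk : 1 ≤ k) :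
    (Set.univ : Set (Fin n → ℤ)).PairwiseDisjoint (lpvCube n k) := by
  intro m _ m' _ hne
  refine Set.disjoint_left.mpr fun x hx hx' => hne ?_
  funext i
  have h1 := hx i (Set.mem_univ i)
  have h2 := hx' i (Set.mem_univ i)
  simp only [Set.mem_Ico] at h1 h2
  have hk0 : (0:ℝ) < k := by positivity
  have e1 : m i ≤ m' i := by
    have : (m i : ℝ) / k < (m' i : ℝ) / k + 1 / k := lt_of_le_of_lt h1.1 h2.2
    rw [← add_div, div_lt_div_iff_of_pos_right hk0] at this
    exact_mod_cast Int.lt_add_one_iff.mp (by exact_mod_cast this)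
  have e2 : m' i ≤ m i := by
    have : (m' i : ℝ) / k < (m i : ℝ) / k + 1 / k := lt_of_le_of_lt h2.1 h1.2
    rw [← add_div, div_lt_div_iff_of_pos_right hk0] at this
    exact_mod_cast Int.lt_add_one_iff.mp (by exact_mod_cast this)
  exact le_antisymm e1 e2

lemma lpv_sub_outer (n k : ℕ) (hk : 1 ≤ k) (Δ : Set (Fin n → ℝ)) :
    (⋃ m ∈ lpvTset n k Δ, lpvCube n k m) ⊆ cthickening (1 / k) Δ := by
  have hk0 : (0:ℝ) < k := by positivity
  rintro x hx
  simp only [Set.mem_iUnion] at hx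
  obtain ⟨m, hm, hxm⟩ := hx
  rw [lpv_mem_Tset n k hk] at hm
  refine mem_cthickening_of_dist_le x _ (1 / k) _ hm ?_
  rw [dist_pi_le_iff (by positivity)]
  intro i
  have h := hxm i (Set.mem_univ i)
  simp only [Set.mem_Ico] at h
  rw [Real.dist_eq, abs_le]
  constructor <;> linarith [h.1, h.2, one_div_pos.mpr hk0]

lemma lpv_sub_inner (n k : ℕ) (hk : 1 ≤ k) (Δ : Set (Fin n → ℝ)) :
    {x | closedBall x (1 / k) ⊆ Δ} ⊆ ⋃ m ∈ lpvTset n k Δ, lpvCube n k m := by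
  have hk0 : (0:ℝ) < k := by positivity
  intro x hx
  set m : Fin n → ℤ := fun i => ⌊(k : ℝ) * x i⌋ with hm
  have hb : ∀ i, (m i : ℝ) / k ≤ x i ∧ x i < (m i : ℝ) / k + 1 / k := by
    intro i
    have h1 : (m i : ℝ) ≤ k * x i := Int.floor_le _
    have h2 : (k : ℝ) * x i < m i + 1 := Int.lt_floor_add_one _
    constructor
    · rw [div_le_iff₀ hk0]; linarith
    · rw [← add_div, lt_div_iff₀ hk0]; linarith
  have hmem : m ∈ lpvTset n k Δ := by
    rw [lpv_mem_Tset n k hk]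
    refine hx ?_
    rw [mem_closedBall, dist_pi_le_iff (by positivity)]
    intro i
    rw [Real.dist_eq, abs_le]
    constructor <;> linarith [(hb i).1, (hb i).2, one_div_pos.mpr hk0]
  simp only [Set.mem_iUnion]
  exact ⟨m, hmem, fun i _ => Set.mem_Ico.mpr (hb i)⟩

lemma lpv_vol_union {n : ℕ} {Δ : Set (Fin n → ℝ)} (k : ℕ) (hk : 1 ≤ k)
    (hfin : (lpvTset n k Δ).Finite) :
    volume (⋃ m ∈ lpvTset n k Δ, lpvCube n k m)
      = (Nat.card (lpvTset n k Δ)) * ENNReal.ofReal (1 / k) ^ n := by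
  classical
  have h1 : (⋃ m ∈ lpvTset n k Δ, lpvCube n k m) = ⋃ m ∈ hfin.toFinset, lpvCube n k m := by
    simp [Set.Finite.mem_toFinset]
  rw [h1, measure_biUnion_finset ?hd ?hm]
  · rw [Finset.sum_congr rfl fun m _ => lpv_vol_cube n k m, Finset.sum_const, nsmul_eq_mul]
    congr 1
    rw [Nat.card_coe_set_eq, Set.ncard_eq_toFinset_card _ hfin]

  case hd => exact fun m _ m' _ h => lpv_disjoint n k hk (Set.mem_univ m) (Set.mem_univ m') h
  case hm =>
    intro m _
    exact MeasurableSet.univ_pi fun i => measurableSet_Ico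

end AuxLattice

/-- For a nonempty compact convex `Δ ⊆ ℝⁿ`, the number of lattice points in the dilate
`kΔ` divided by `kⁿ` tends to the volume of `Δ` as `k → ∞`. -/
theorem lattice_point_count_tendsto_volume (n : ℕ) (Δ : Set (Fin n → ℝ))
    (hne : Δ.Nonempty) (hcp : IsCompact Δ) (hcv : Convex ℝ Δ) :
    Tendsto (fun k : ℕ =>
        (Nat.card ↥(((k : ℝ) • Δ) ∩ intPts n) : ℝ) / (k : ℝ) ^ n)
      atTop (nhds (volume Δ).toReal) := by
  classical
  have hΔfin : volume Δ ≠ ⊤ := hcp.measure_lt_top.ne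
  -- outer approximation
  have houter : Tendsto (fun k : ℕ => volume (Metric.cthickening (1 / (k:ℝ)) Δ))
      atTop (nhds (volume Δ)) := by
    have h1 : Tendsto (fun r : ℝ => volume (Metric.cthickening r Δ)) (nhds 0)
        (nhds (volume (closure Δ))) := by
      apply tendsto_measure_cthickening
      exact ⟨1, one_pos, ((hcp.isBounded.cthickening).measure_lt_top).ne⟩
    rw [hcp.isClosed.closure_eq] at h1
    exact h1.comp tendsto_one_div_atTop_nhds_zero_nat
  -- inner approximation
  set J : ℕ → Set (Fin n → ℝ) := fun k => {x | Metric.closedBall x (1 / ((k:ℝ)+1)) ⊆ Δ} with hJdef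
  have hinner : Tendsto (fun k : ℕ => volume (J k)) atTop (nhds (volume Δ)) := by
    have hmono : Monotone J := by
      intro a b hab x hx
      refine subset_trans (Metric.closedBall_subset_closedBall ?_) hx
      apply one_div_le_one_div_of_le (by positivity)
      exact_mod_cast Nat.add_le_add_right hab 1
    have hunion : (⋃ k, J k) = interior Δ := by
      ext x
      simp only [Set.mem_iUnion, hJdef, Set.mem_setOf_eq, mem_interior_iff_mem_nhds]
      constructor
      · rintro ⟨k, hk⟩
        exact Filter.mem_of_superset (Metric.closedBall_mem_nhds x (by positivity)) hk
      · intro hx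
        obtain ⟨ε, hε, hball⟩ := Metric.mem_nhds_iff.mp hx
        obtain ⟨k, hki⟩ := exists_nat_gt (1/ε)
        refine ⟨k, subset_trans ?_ hball⟩
        apply Metric.closedBall_subset_ball
        rw [div_lt_iff₀ (by positivity)]
        rw [div_lt_iff₀ hε] at hki
        nlinarith [hε, Nat.cast_nonneg (α := ℝ) k]
    have hint : volume (interior Δ) = volume Δ := by
      refine le_antisymm (measure_mono interior_subset) ?_
      calc volume Δ ≤ volume (interior Δ ∪ frontier Δ) := by
            apply measure_mono
            rw [← closure_eq_interior_union_frontier]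
            exact subset_closure
        _ ≤ volume (interior Δ) + volume (frontier Δ) := measure_union_le _ _
        _ = volume (interior Δ) := by rw [hcv.addHaar_frontier volume, add_zero]
    have := tendsto_measure_iUnion_atTop (μ := volume) hmono
    rw [hunion, hint] at this
    exact this
  -- squeeze
  refine tendsto_of_tendsto_of_tendsto_of_le_of_le'
    ((ENNReal.tendsto_toReal hΔfin).comp (hinner.comp (tendsto_sub_atTop_nat 1)))
    ((ENNReal.tendsto_toReal hΔfin).comp houter) ?_ ?_
  · -- lower bound : vol (J (k-1)) ≤ f k
    filter_upwards [eventually_ge_atTop 1] with k hk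
    have hk0 : (0:ℝ) < k := by positivity
    have hfin := lpvTset_finite hcp (Δ := Δ) k
    have hvol := lpv_vol_union k hk hfin
    have hSfin : volume (⋃ m ∈ lpvTset n k Δ, lpvCube n k m) ≠ ⊤ := by
      rw [hvol]
      exact ENNReal.mul_ne_top (ENNReal.natCast_ne_top _)
        (ENNReal.pow_ne_top ENNReal.ofReal_ne_top)
    have hkk : ((k - 1 : ℕ) : ℝ) + 1 = (k : ℝ) := by
      rw [Nat.cast_sub hk]; push_cast; ring
    have hsub : J (k - 1) ⊆ ⋃ m ∈ lpvTset n k Δ, lpvCube n k m := by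
      rw [hJdef]
      simp only [hkk]
      exact lpv_sub_inner n k hk Δ
    have hle : (volume (J (k-1))).toReal
        ≤ (volume (⋃ m ∈ lpvTset n k Δ, lpvCube n k m)).toReal :=
      ENNReal.toReal_mono hSfin (measure_mono hsub)
    refine le_trans hle (le_of_eq ?_)
    rw [hvol, lpv_card_eq n k Δ, ENNReal.toReal_mul, ENNReal.toReal_pow,
      ENNReal.toReal_natCast, ENNReal.toReal_ofReal (by positivity)]
    rw [one_div, inv_pow, div_eq_mul_inv]
  · -- upper bound : f k ≤ vol (cthickening (1/k) Δ)
    filter_upwards [eventually_ge_atTop 1] with k hk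
    have hk0 : (0:ℝ) < k := by positivity
    have hfin := lpvTset_finite hcp (Δ := Δ) k
    have hvol := lpv_vol_union k hk hfin
    have hle : (volume (⋃ m ∈ lpvTset n k Δ, lpvCube n k m)).toReal
        ≤ (volume (Metric.cthickening (1 / (k:ℝ)) Δ)).toReal :=
      ENNReal.toReal_mono ((hcp.isBounded.cthickening).measure_lt_top).ne
        (measure_mono (lpv_sub_outer n k hk Δ))
    refine le_trans (le_of_eq ?_) hle
    rw [hvol, lpv_card_eq n k Δ, ENNReal.toReal_mul, ENNReal.toReal_pow,
      ENNReal.toReal_natCast, ENNReal.toReal_ofReal (by positivity)]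
    rw [one_div, inv_pow, div_eq_mul_inv]
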